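/- Eigenvalue gap growth along the non-mixing field (finite-dimensional version): let H : ℝ³ → Herm(n) be affine, γ a differentiable curve with γ'(t) = X(φ_j(γ(t)), φ_{j+1}(γ(t))) where φ_j, φ_{j+1} are differentiable orthonormal eigenvector branches for simple eigenvalues λ_j(γ(t)) < λ_{j+1}(γ(t)). Then d/dt[λ_{j+1}(γ(t)) − λ_j(γ(t))] = (1/(2i)) det M(φ_j(γ(t)), φ_{j+1}(γ(t))). -/

import Mathlib

open Complex
open scoped InnerProductSpace ComplexConjugate

private lemma det3_aux (a d : Fin 3 → ℂ) :
    (Matrix.of fun i => ![a i, conj (a i), d i]).det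
      = 2 * I * ( ((a 1 * conj (a 2)).im : ℂ) * d 0
        + ((a 2 * conj (a 0)).im : ℂ) * d 1
        + ((a 0 * conj (a 1)).im : ℂ) * d 2 ) := by
  simp only [Matrix.det_fin_three, Matrix.of_apply, Matrix.cons_val', Matrix.cons_val_zero,
    Matrix.cons_val_one, Matrix.head_cons, Matrix.cons_val_two, Matrix.tail_cons,
    Matrix.empty_val', Matrix.cons_val_fin_one]
  apply Complex.ext <;>
    simp [Complex.mul_re, Complex.mul_im] <;> ring

private lemma fh_aux {n : ℕ}
    (H₀ : EuclideanSpace ℂ (Fin n) →L[ℂ] EuclideanSpace ℂ (Fin n))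
    (Hc : Fin 3 → (EuclideanSpace ℂ (Fin n) →L[ℂ] EuclideanSpace ℂ (Fin n)))
    (hH₀ : IsSelfAdjoint H₀) (hHc : ∀ i, IsSelfAdjoint (Hc i))
    (γ γd : ℝ → Fin 3 → ℝ) (hγ : ∀ t, HasDerivAt γ (γd t) t)
    (φ φd : ℝ → EuclideanSpace ℂ (Fin n)) (lam lamd : ℝ → ℝ)
    (hφ : ∀ t, HasDerivAt φ (φd t) t) (hlam : ∀ t, HasDerivAt lam (lamd t) t)
    (heig : ∀ t, (H₀ + ∑ i, (γ t i : ℂ) • Hc i) (φ t) = (lam t : ℂ) • φ t)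
    (hnorm : ∀ t, ⟪φ t, φ t⟫_ℂ = 1) (t : ℝ) :
    (lamd t : ℂ) = ∑ i, (γd t i : ℂ) * ⟪φ t, Hc i (φ t)⟫_ℂ := by
  set B : EuclideanSpace ℂ (Fin n) →L[ℂ] EuclideanSpace ℂ (Fin n) :=
    H₀ + ∑ i, (γ t i : ℂ) • Hc i with hB
  -- self-adjointness of B
  have hBsa : IsSelfAdjoint B := by
    have : star B = B := by
      simp [hB, ContinuousLinearMap.star_eq_adjoint, map_sum, hH₀.adjoint_eq,
        LinearIsometryEquiv.map_smulₛₗ, fun i => (hHc i).adjoint_eq, Complex.coe_smul]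
      exact Finset.sum_congr rfl fun i _ => rfl
    exact this
  have hBadj : ContinuousLinearMap.adjoint B = B := by
    rw [← ContinuousLinearMap.star_eq_adjoint]; exact hBsa.star_eq
  -- derivative of each piece
  have hφcomp : ∀ (A : EuclideanSpace ℂ (Fin n) →L[ℂ] EuclideanSpace ℂ (Fin n)),
      HasDerivAt (fun s => A (φ s)) (A (φd t)) t :=
    fun A => by
      have := ((A.restrictScalars ℝ).hasFDerivAt (x := φ t)).comp_hasDerivAt t (hφ t)
      exact this
  have h0 : HasDerivAt (fun s => ⟪φ s, H₀ (φ s)⟫_ℂ)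
      (⟪φ t, H₀ (φd t)⟫_ℂ + ⟪φd t, H₀ (φ t)⟫_ℂ) t :=
    (hφ t).inner ℂ (hφcomp H₀)
  have hi : ∀ i : Fin 3, HasDerivAt (fun s => ((γ s i : ℂ)) * ⟪φ s, Hc i (φ s)⟫_ℂ)
      ((γd t i : ℂ) * ⟪φ t, Hc i (φ t)⟫_ℂ
        + (γ t i : ℂ) * (⟪φ t, Hc i (φd t)⟫_ℂ + ⟪φd t, Hc i (φ t)⟫_ℂ)) t := by
    intro i
    exact ((hasDerivAt_pi.mp (hγ t) i).ofReal_comp).mul ((hφ t).inner ℂ (hφcomp (Hc i)))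
  have hg : HasDerivAt (fun s => ⟪φ s, H₀ (φ s)⟫_ℂ + ∑ i, ((γ s i : ℂ)) * ⟪φ s, Hc i (φ s)⟫_ℂ)
      ((⟪φ t, H₀ (φd t)⟫_ℂ + ⟪φd t, H₀ (φ t)⟫_ℂ)
        + ∑ i, ((γd t i : ℂ) * ⟪φ t, Hc i (φ t)⟫_ℂ
          + (γ t i : ℂ) * (⟪φ t, Hc i (φd t)⟫_ℂ + ⟪φd t, Hc i (φ t)⟫_ℂ))) t :=
    h0.add (HasDerivAt.fun_sum fun i _ => hi i)
  -- the function equals s ↦ (lam s : ℂ)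
  have hfun : (fun s => ⟪φ s, H₀ (φ s)⟫_ℂ + ∑ i, ((γ s i : ℂ)) * ⟪φ s, Hc i (φ s)⟫_ℂ)
      = fun s => ((lam s : ℝ) : ℂ) := by
    funext s
    have h1 : ⟪φ s, (H₀ + ∑ i, (γ s i : ℂ) • Hc i) (φ s)⟫_ℂ = (lam s : ℂ) := by
      rw [heig s, inner_smul_right, hnorm s, mul_one]
    rw [← h1]
    simp [ContinuousLinearMap.add_apply, ContinuousLinearMap.sum_apply,
      ContinuousLinearMap.coe_smul', Pi.smul_apply, inner_add_right, inner_sum,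
      inner_smul_right, Finset.mul_sum, mul_left_comm]
  rw [hfun] at hg
  have huniq := hg.unique ((hlam t).ofReal_comp)
  -- orthogonality of φ and φd (in the symmetric sense)
  have h3 : ⟪φ t, φd t⟫_ℂ + ⟪φd t, φ t⟫_ℂ = 0 := by
    have hc : HasDerivAt (fun s => ⟪φ s, φ s⟫_ℂ) (⟪φ t, φd t⟫_ℂ + ⟪φd t, φ t⟫_ℂ) t :=
      (hφ t).inner ℂ (hφ t)
    have : (fun s => ⟪φ s, φ s⟫_ℂ) = fun _ => (1 : ℂ) := funext fun s => hnorm s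
    rw [this] at hc
    exact hc.unique (hasDerivAt_const t 1)
  -- mixed terms vanish
  have heigB : B (φ t) = (lam t : ℂ) • φ t := by rw [hB]; exact heig t
  have hmix : ⟪φ t, B (φd t)⟫_ℂ + ⟪φd t, B (φ t)⟫_ℂ = 0 := by
    have h1 : ⟪φ t, B (φd t)⟫_ℂ = (lam t : ℂ) * ⟪φ t, φd t⟫_ℂ := by
      rw [← hBadj, ContinuousLinearMap.adjoint_inner_right, heigB, inner_smul_left,
        Complex.conj_ofReal]
    have h2 : ⟪φd t, B (φ t)⟫_ℂ = (lam t : ℂ) * ⟪φd t, φ t⟫_ℂ := by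
      rw [heigB, inner_smul_right]
    rw [h1, h2, ← mul_add, h3, mul_zero]
  -- rearrange hg's derivative
  have hrearr : (⟪φ t, H₀ (φd t)⟫_ℂ + ⟪φd t, H₀ (φ t)⟫_ℂ)
        + ∑ i, ((γd t i : ℂ) * ⟪φ t, Hc i (φ t)⟫_ℂ
          + (γ t i : ℂ) * (⟪φ t, Hc i (φd t)⟫_ℂ + ⟪φd t, Hc i (φ t)⟫_ℂ))
      = (⟪φ t, B (φd t)⟫_ℂ + ⟪φd t, B (φ t)⟫_ℂ)
        + ∑ i, (γd t i : ℂ) * ⟪φ t, Hc i (φ t)⟫_ℂ := by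
    simp only [hB, ContinuousLinearMap.add_apply, ContinuousLinearMap.sum_apply,
      ContinuousLinearMap.coe_smul', Pi.smul_apply, inner_add_right, inner_sum,
      inner_smul_right, Finset.sum_add_distrib, mul_add]
    ring
  rw [hrearr, hmix, zero_add] at huniq
  exact huniq.symm


/-- eigenvalue gap growth along the non-mixing field: if the control curve
`γ` solves `γ' = X(φ_j, φ_{j+1})`, then
`d/dt [λ_{j+1}(γ(t)) − λ_j(γ(t))] = (1/(2i)) det M(φ_j(γ(t)), φ_{j+1}(γ(t)))`. -/
theorem gap_derivative_along_nonmixing_field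
    {n : ℕ}
    (H₀ : EuclideanSpace ℂ (Fin n) →L[ℂ] EuclideanSpace ℂ (Fin n))
    (Hc : Fin 3 → (EuclideanSpace ℂ (Fin n) →L[ℂ] EuclideanSpace ℂ (Fin n)))
    (hH₀ : IsSelfAdjoint H₀) (hHc : ∀ i, IsSelfAdjoint (Hc i))
    (m : EuclideanSpace ℂ (Fin n) → EuclideanSpace ℂ (Fin n) → Fin 3 → ℂ)
    (hm : ∀ ψ₁ ψ₂, m ψ₁ ψ₂ = fun i => ⟪ψ₁, Hc i ψ₂⟫_ℂ)
    (Xf : EuclideanSpace ℂ (Fin n) → EuclideanSpace ℂ (Fin n) → Fin 3 → ℝ)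
    (hXf : ∀ ψ₁ ψ₂, Xf ψ₁ ψ₂ =
      ![(m ψ₁ ψ₂ 1 * conj (m ψ₁ ψ₂ 2)).im,
        (m ψ₁ ψ₂ 2 * conj (m ψ₁ ψ₂ 0)).im,
        (m ψ₁ ψ₂ 0 * conj (m ψ₁ ψ₂ 1)).im])
    (M : EuclideanSpace ℂ (Fin n) → EuclideanSpace ℂ (Fin n) → Matrix (Fin 3) (Fin 3) ℂ)
    (hMdef : ∀ ψ₁ ψ₂, M ψ₁ ψ₂ = Matrix.of fun i =>
      ![m ψ₁ ψ₂ i, conj (m ψ₁ ψ₂ i), ⟪ψ₂, Hc i ψ₂⟫_ℂ - ⟪ψ₁, Hc i ψ₁⟫_ℂ])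
    (γ : ℝ → (Fin 3 → ℝ))
    (φj φj1 φj' φj1' : ℝ → EuclideanSpace ℂ (Fin n))
    (lamj lamj1 lamj' lamj1' : ℝ → ℝ)
    (hγ : ∀ t, HasDerivAt γ (Xf (φj t) (φj1 t)) t)
    (hφj : ∀ t, HasDerivAt φj (φj' t) t) (hφj1 : ∀ t, HasDerivAt φj1 (φj1' t) t)
    (hlamj : ∀ t, HasDerivAt lamj (lamj' t) t) (hlamj1 : ∀ t, HasDerivAt lamj1 (lamj1' t) t)
    (heigj : ∀ t, (H₀ + ∑ i, (γ t i : ℂ) • Hc i) (φj t) = (lamj t : ℂ) • φj t)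
    (heigj1 : ∀ t, (H₀ + ∑ i, (γ t i : ℂ) • Hc i) (φj1 t) = (lamj1 t : ℂ) • φj1 t)
    (hnormj : ∀ t, ⟪φj t, φj t⟫_ℂ = 1) (hnormj1 : ∀ t, ⟪φj1 t, φj1 t⟫_ℂ = 1)
    (horth : ∀ t, ⟪φj t, φj1 t⟫_ℂ = 0)
    (hgap : ∀ t, lamj t < lamj1 t) :
    ∀ t, ((lamj1' t - lamj' t : ℝ) : ℂ) = (1 / (2 * I)) * (M (φj t) (φj1 t)).det := by
  intro t
  have hj := fh_aux H₀ Hc hH₀ hHc γ (fun t => Xf (φj t) (φj1 t)) hγ φj φj' lamj lamj' hφj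
    hlamj heigj hnormj t
  have hj1 := fh_aux H₀ Hc hH₀ hHc γ (fun t => Xf (φj t) (φj1 t)) hγ φj1 φj1' lamj1 lamj1' hφj1
    hlamj1 heigj1 hnormj1 t
  set a : Fin 3 → ℂ := m (φj t) (φj1 t) with ha
  set d : Fin 3 → ℂ := fun i => ⟪φj1 t, Hc i (φj1 t)⟫_ℂ - ⟪φj t, Hc i (φj t)⟫_ℂ with hd
  have hdet : (M (φj t) (φj1 t)).det
      = 2 * I * ( ((a 1 * conj (a 2)).im : ℂ) * d 0
        + ((a 2 * conj (a 0)).im : ℂ) * d 1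
        + ((a 0 * conj (a 1)).im : ℂ) * d 2 ) := by
    rw [hMdef]
    exact det3_aux a d
  have hX : ∀ i, ((Xf (φj t) (φj1 t) i : ℝ) : ℂ) * d i
      = ![((a 1 * conj (a 2)).im : ℂ) * d 0,
          ((a 2 * conj (a 0)).im : ℂ) * d 1,
          ((a 0 * conj (a 1)).im : ℂ) * d 2] i := by
    intro i
    fin_cases i <;> simp [hXf, ha]
  have hsum : ((lamj1' t : ℂ) - (lamj' t : ℂ))
      = ((a 1 * conj (a 2)).im : ℂ) * d 0 + ((a 2 * conj (a 0)).im : ℂ) * d 1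
        + ((a 0 * conj (a 1)).im : ℂ) * d 2 := by
    rw [hj1, hj, ← Finset.sum_sub_distrib]
    have : ∀ i : Fin 3, ((Xf (φj t) (φj1 t) i : ℝ) : ℂ) * ⟪φj1 t, Hc i (φj1 t)⟫_ℂ
        - ((Xf (φj t) (φj1 t) i : ℝ) : ℂ) * ⟪φj t, Hc i (φj t)⟫_ℂ
        = ((Xf (φj t) (φj1 t) i : ℝ) : ℂ) * d i := by
      intro i; rw [hd, mul_sub]
    simp only [this]
    rw [Fin.sum_univ_three]
    rw [hX 0, hX 1, hX 2]
    simp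
  rw [hdet]
  push_cast
  rw [hsum]
  have hI : (2 : ℂ) * I ≠ 0 := by simp [Complex.I_ne_zero]
  field_simp
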